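/- Upper bound of the total-variation cutoff for the one-sided transposition shuffle: for every real c > 0, limsup_{n→∞} ‖OST_n^{⌈n·log n + c·n⌉} − π_n‖_TV ≤ √2 · e^{−c}. -/

import Mathlib

open scoped BigOperators

/-- The one-sided transposition shuffle on `S_n`:
`OST n σ = 1/(n·j)` if `σ = (i j)` with `1 ≤ i < j ≤ n` (here positions are the
elements of `Fin n`, so position `j` carries weight `1/(n(j+1))`), `OST n 1 = H_n/n`,
and `0` otherwise.  The convention `(i i) = e` makes the identity mass `H_n/n`. -/
noncomputable def OST (n : ℕ) : Equiv.Perm (Fin n) → ℝ := fun σ =>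
  ∑ j : Fin n, ∑ i : Fin n,
    if i ≤ j ∧ σ = Equiv.swap i j then ((n : ℝ) * (((j : ℕ) : ℝ) + 1))⁻¹ else 0

/-- Convolution of two distributions on `S_n`: `(P ⋆ Q)(g) = ∑_h P(g h⁻¹) Q(h)`. -/
noncomputable def convol {n : ℕ} (P Q : Equiv.Perm (Fin n) → ℝ) :
    Equiv.Perm (Fin n) → ℝ :=
  fun g => ∑ h : Equiv.Perm (Fin n), P (g * h⁻¹) * Q h

/-- `convPow P t` is the `t`-fold convolution `P^t` of `P` with itself. -/
noncomputable def convPow {n : ℕ} (P : Equiv.Perm (Fin n) → ℝ) :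
    ℕ → Equiv.Perm (Fin n) → ℝ
  | 0 => fun g => if g = 1 then 1 else 0
  | t + 1 => convol P (convPow P t)

/-- The uniform distribution `π_n` on `S_n`. -/
noncomputable def uniformPerm (n : ℕ) : Equiv.Perm (Fin n) → ℝ :=
  fun _ => ((Nat.factorial n : ℝ))⁻¹

/-- Total variation distance: `‖μ − ν‖_TV = (1/2) ∑_σ |μ σ − ν σ|`. -/
noncomputable def tvDist {n : ℕ} (μ ν : Equiv.Perm (Fin n) → ℝ) : ℝ :=
  (1 / 2) * ∑ σ : Equiv.Perm (Fin n), |μ σ - ν σ|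

namespace OSTAux

open Finset MonoidAlgebra

variable {n : ℕ}

/-- The group algebra we work in. -/
abbrev A (n : ℕ) := MonoidAlgebra ℝ (Equiv.Perm (Fin n))

instance instCoeFunA : CoeFun (A n) (fun _ => Equiv.Perm (Fin n) → ℝ) := ⟨fun P => P.coeff⟩

/-- The single-right-position step distribution, as a group algebra element. -/
noncomputable def step (j : Fin n) : A n :=
  ∑ i ∈ Finset.Iic j, MonoidAlgebra.single (Equiv.swap i j) (((j : ℕ) : ℝ) + 1)⁻¹

/-- The uniform distribution as a group algebra element. -/
noncomputable def unifA (n : ℕ) : A n :=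
  ∑ g : Equiv.Perm (Fin n), MonoidAlgebra.single g ((n.factorial : ℝ))⁻¹

/-- Permutations fixing all positions with index `≥ k`. -/
def Sfix (n k : ℕ) : Finset (Equiv.Perm (Fin n)) :=
  Finset.univ.filter fun g => ∀ p : Fin n, k ≤ (p : ℕ) → g p = p

/-- Uniform distribution on `Sfix n k`. -/
noncomputable def unifOn (n k : ℕ) : A n :=
  ∑ g ∈ Sfix n k, MonoidAlgebra.single g ((k.factorial : ℝ))⁻¹

lemma mem_Sfix {k : ℕ} {g : Equiv.Perm (Fin n)} :
    g ∈ Sfix n k ↔ ∀ p : Fin n, k ≤ (p : ℕ) → g p = p := by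
  simp [Sfix]

lemma Sfix_zero : Sfix n 0 = {1} := by
  ext g
  simp only [mem_Sfix, Finset.mem_singleton]
  constructor
  · intro h; ext p; rw [h p (Nat.zero_le _)]; rfl
  · rintro rfl p _; rfl

lemma Sfix_of_le (h : n ≤ k) : Sfix n k = Finset.univ := by
  ext g
  simp only [mem_Sfix, Finset.mem_univ, iff_true]
  intro p hp
  exact absurd (lt_of_lt_of_le p.isLt h) (not_lt.2 hp)

lemma unifOn_zero : unifOn n 0 = 1 := by
  rw [unifOn, Sfix_zero]
  simp [MonoidAlgebra.one_def]

lemma unifOn_n : unifOn n n = unifA n := by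
  rw [unifOn, unifA, Sfix_of_le le_rfl]


lemma swap_key {i a l b : Fin n} (hib : i ≠ b) (hab : a ≠ b) :
    Equiv.swap i a * Equiv.swap l b
      = Equiv.swap (Equiv.swap i a l) b * Equiv.swap i a := by
  have hb : Equiv.swap i a b = b := Equiv.swap_apply_of_ne_of_ne hib.symm hab.symm
  have h := Equiv.swap_apply_apply (Equiv.swap i a) l b
  rw [hb] at h
  rw [h]
  group

lemma swap_mem_Iic {i a l b : Fin n} (hi : i ≤ a) (hab : a ≤ b) (hl : l ≤ b) :
    Equiv.swap i a l ≤ b := by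
  rcases eq_or_ne l i with rfl | hli
  · rw [Equiv.swap_apply_left]; exact hab
  rcases eq_or_ne l a with rfl | hla
  · rw [Equiv.swap_apply_right]; exact le_trans hi hab
  · rw [Equiv.swap_apply_of_ne_of_ne hli hla]; exact hl

lemma step_mul_step_of_lt {a b : Fin n} (hab : a < b) :
    step a * step b = step b * step a := by
  unfold step
  rw [Finset.sum_mul_sum, Finset.sum_mul_sum]
  conv_rhs => rw [Finset.sum_comm]
  refine Finset.sum_congr rfl (fun i hi => ?_)
  rw [Finset.mem_Iic] at hi
  refine Finset.sum_equiv (Equiv.swap i a) ?_ ?_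
  · intro l
    simp only [Finset.mem_Iic]
    constructor
    · intro hl; exact swap_mem_Iic hi hab.le hl
    · intro hl
      have := swap_mem_Iic hi hab.le hl
      rwa [Equiv.swap_apply_self] at this
  · intro l hl
    rw [Finset.mem_Iic] at hl
    have hib : i ≠ b := ne_of_lt (lt_of_le_of_lt hi hab)
    rw [MonoidAlgebra.single_mul_single, MonoidAlgebra.single_mul_single,
      swap_key hib hab.ne, mul_comm (((b : ℕ) : ℝ) + 1)⁻¹]

lemma step_commute (a b : Fin n) : Commute (step a) (step b) := by
  rcases lt_trichotomy a b with h | h | h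
  · exact step_mul_step_of_lt h
  · subst h; exact Commute.refl _
  · exact (step_mul_step_of_lt h).symm

lemma pairwise_commute (L : List (Fin n)) :
    (L.map step).Pairwise Commute := by
  induction L with
  | nil => exact List.Pairwise.nil
  | cons j L ih =>
    refine List.Pairwise.cons ?_ ih
    intro b hb
    rcases List.mem_map.1 hb with ⟨a, _, rfl⟩
    exact step_commute j a


lemma card_Iic_fin (j : Fin n) : (Finset.Iic j).card = (j : ℕ) + 1 := Fin.card_Iic j

lemma unif_mul_single (s : Equiv.Perm (Fin n)) (c : ℝ) :
    unifA n * MonoidAlgebra.single s c = c • unifA n := by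
  rw [unifA, Finset.sum_mul, Finset.smul_sum]
  refine Finset.sum_equiv (Equiv.mulRight s) (by simp) ?_
  intro g _
  rw [MonoidAlgebra.single_mul_single, MonoidAlgebra.smul_single]
  simp [mul_comm]

lemma unif_mul_step (j : Fin n) : unifA n * step j = unifA n := by
  rw [step, Finset.mul_sum]
  have : ∀ i ∈ Finset.Iic j, unifA n * MonoidAlgebra.single (Equiv.swap i j) (((j : ℕ) : ℝ) + 1)⁻¹
      = (((j : ℕ) : ℝ) + 1)⁻¹ • unifA n := fun i _ => unif_mul_single _ _
  rw [Finset.sum_congr rfl this, Finset.sum_const, card_Iic_fin,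
    ← Nat.cast_smul_eq_nsmul ℝ, smul_smul]
  push_cast
  rw [mul_inv_cancel₀ (by positivity), one_smul]

lemma unif_mul_list (L : List (Fin n)) : unifA n * (L.map step).prod = unifA n := by
  induction L with
  | nil => simp
  | cons j L ih =>
    rw [List.map_cons, List.prod_cons, ← mul_assoc, unif_mul_step, ih]

/-- Fisher–Yates induction step. -/
lemma step_mul_unifOn (j : Fin n) :
    step j * unifOn n (j : ℕ) = unifOn n ((j : ℕ) + 1) := by
  rw [step, unifOn, unifOn, Finset.sum_mul_sum]
  simp_rw [MonoidAlgebra.single_mul_single]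
  rw [← Finset.sum_product']
  refine Finset.sum_nbij' (fun p => Equiv.swap p.1 j * p.2)
    (fun g => (g j, Equiv.swap (g j) j * g)) ?_ ?_ ?_ ?_ ?_
  · rintro ⟨i, x⟩ hp
    rw [Finset.mem_product, Finset.mem_Iic, mem_Sfix] at hp
    obtain ⟨hi, hx⟩ := hp
    rw [mem_Sfix]
    intro p hp
    have hpj : (j : ℕ) < (p : ℕ) := Nat.lt_of_succ_le hp
    have hxp : x p = p := hx p (le_of_lt hpj)
    have h1 : p ≠ i := by
      intro h; subst h
      exact absurd (lt_of_le_of_lt (Fin.le_def.1 hi) hpj) (lt_irrefl _)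
    have h2 : p ≠ j := by
      intro h; subst h; exact lt_irrefl _ hpj
    simp [Equiv.Perm.mul_apply, hxp, Equiv.swap_apply_of_ne_of_ne h1 h2]
  · intro g hg
    rw [mem_Sfix] at hg
    have hgj : (g j : ℕ) ≤ (j : ℕ) := by
      by_contra hcon
      push_neg at hcon
      have : g (g j) = g j := hg (g j) hcon
      have := g.injective this
      rw [this] at hcon
      exact lt_irrefl _ hcon
    rw [Finset.mem_product, Finset.mem_Iic, mem_Sfix]
    refine ⟨Fin.le_def.2 hgj, ?_⟩
    intro p hp
    rcases eq_or_ne p j with rfl | hpj'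
    · simp [Equiv.Perm.mul_apply]
    have hpj : (j : ℕ) < (p : ℕ) := lt_of_le_of_ne hp (fun h => hpj' (Fin.ext h.symm))
    have hgp : g p = p := hg p (Nat.succ_le_of_lt hpj)
    have h1 : p ≠ g j := by
      intro h
      rw [h] at hpj
      exact absurd hpj (not_lt.2 hgj)
    simp [Equiv.Perm.mul_apply, hgp, Equiv.swap_apply_of_ne_of_ne h1 hpj']
  · rintro ⟨i, x⟩ hp
    rw [Finset.mem_product, Finset.mem_Iic, mem_Sfix] at hp
    obtain ⟨hi, hx⟩ := hp
    have hxj : x j = j := hx j le_rfl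
    have h1 : (Equiv.swap i j * x) j = i := by
      simp [Equiv.Perm.mul_apply, hxj]
    dsimp only
    rw [h1, ← mul_assoc, Equiv.swap_mul_self, one_mul]
  · intro g hg
    dsimp only
    rw [← mul_assoc, Equiv.swap_mul_self, one_mul]
  · rintro ⟨i, x⟩ hp
    congr 1
    rw [Nat.factorial_succ]
    push_cast
    rw [mul_inv]

/-- The decreasing list `[k-1, ..., 1, 0]` inside `Fin n`. -/
def desc (n : ℕ) : ℕ → List (Fin n)
  | 0 => []
  | k + 1 => if h : k < n then (⟨k, h⟩ : Fin n) :: desc n k else desc n k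

lemma mem_desc {k : ℕ} (hk : k ≤ n) {j : Fin n} : j ∈ desc n k ↔ (j : ℕ) < k := by
  induction k with
  | zero => simp [desc]
  | succ k ih =>
    have hk' : k ≤ n := le_of_lt (Nat.lt_of_succ_le hk)
    have h : k < n := Nat.lt_of_succ_le hk
    rw [desc, dif_pos h]
    simp only [List.mem_cons, ih hk']
    constructor
    · rintro (rfl | h2)
      · exact Nat.lt_succ_self _
      · exact lt_trans h2 (Nat.lt_succ_self _)
    · intro h2
      rcases Nat.lt_succ_iff_lt_or_eq.1 h2 with h3 | h3
      · exact Or.inr h3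
      · exact Or.inl (by ext; exact h3)

lemma prod_desc : ∀ k, k ≤ n → ((desc n k).map step).prod = unifOn n k := by
  intro k
  induction k with
  | zero => intro _; simp [desc, unifOn_zero]
  | succ k ih =>
    intro hk
    have h : k < n := Nat.lt_of_succ_le hk
    rw [desc, dif_pos h, List.map_cons, List.prod_cons, ih (le_of_lt h)]
    have := step_mul_unifOn (n := n) ⟨k, h⟩
    simpa using this

lemma prod_desc_n : ((desc n n).map step).prod = unifA n := by
  rw [prod_desc n le_rfl, unifOn_n]

lemma desc_nodup : ∀ k, k ≤ n → (desc n k).Nodup := by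
  intro k
  induction k with
  | zero => intro _; simp [desc]
  | succ k ih =>
    intro hk
    have h : k < n := Nat.lt_of_succ_le hk
    rw [desc, dif_pos h]
    refine List.Nodup.cons ?_ (ih (le_of_lt h))
    intro hmem
    have := (mem_desc (le_of_lt h)).1 hmem
    simp at this

/-- The key combinatorial theorem: a covering product of steps is uniform. -/
theorem prod_of_covering (L : List (Fin n)) (hL : ∀ j : Fin n, j ∈ L) :
    (L.map step).prod = unifA n := by
  have hsub : desc n n ⊆ L := fun j _ => hL j
  have hsp : List.Subperm (desc n n) L := (desc_nodup n le_rfl).subperm hsub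
  rw [List.subperm_iff] at hsp
  obtain ⟨l, hlL, hbase⟩ := hsp
  obtain ⟨rest, hrest⟩ := hbase.exists_perm_append
  have hperm : List.Perm L (desc n n ++ rest) := hlL.symm.trans hrest
  have hmap : List.Perm (L.map step) ((desc n n ++ rest).map step) := hperm.map step
  rw [hmap.prod_eq' (pairwise_commute L), List.map_append, List.prod_append,
    prod_desc_n, unif_mul_list]


/-! ### Bridge to the convolution-of-functions world -/

lemma mul_apply_conv (P Q : A n) (x : Equiv.Perm (Fin n)) :
    (P * Q) x = ∑ h : Equiv.Perm (Fin n), P (x * h⁻¹) * Q h := by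
  rw [MonoidAlgebra.mul_apply_right]
  exact Finsupp.sum_fintype _ _ (fun a => by simp)

lemma convol_eq (P Q : A n) : convol ⇑P ⇑Q = ⇑(P * Q) := by
  funext x
  exact (mul_apply_conv P Q x).symm

/-- `OST n` as a group algebra element. -/
noncomputable def ostA (n : ℕ) : A n := ∑ j : Fin n, (n : ℝ)⁻¹ • step j

lemma OST_eq (n : ℕ) : OST n = ⇑(ostA n) := by
  funext σ
  rw [OST, ostA, MonoidAlgebra.coeff_sum, Finset.sum_apply']
  refine Finset.sum_congr rfl fun j _ => ?_
  have hIic : (Finset.Iic j) = Finset.univ.filter (fun i => i ≤ j) := by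
    ext i; simp
  rw [MonoidAlgebra.coeff_smul_apply, step, hIic, Finset.sum_filter, MonoidAlgebra.coeff_sum, Finset.sum_apply', Finset.smul_sum]
  refine Finset.sum_congr rfl fun i _ => ?_
  by_cases h1 : i ≤ j
  · by_cases h2 : σ = Equiv.swap i j
    · simp [h1, h2, Finsupp.single_apply, mul_inv, smul_eq_mul, mul_comm]
    · rw [if_neg (fun hh => h2 hh.2), if_pos h1, MonoidAlgebra.coeff_single, Finsupp.single_apply,
        if_neg (fun hh => h2 hh.symm), smul_zero]
  · simp [h1]

lemma convPow_eq (n : ℕ) : ∀ t, convPow (OST n) t = ⇑(ostA n ^ t)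
  | 0 => by
    funext g
    rw [convPow, pow_zero, MonoidAlgebra.one_def, MonoidAlgebra.coeff_single, Finsupp.single_apply]
    by_cases h : g = 1 <;> simp [h, eq_comm]
  | (t+1) => by
    rw [convPow, convPow_eq n t, OST_eq n, convol_eq, ← pow_succ']

lemma uniformPerm_eq (n : ℕ) : uniformPerm n = ⇑(unifA n) := by
  funext g
  rw [uniformPerm, unifA, MonoidAlgebra.coeff_sum, Finset.sum_apply']
  simp [Finsupp.single_apply]

/-! ### Mass and nonnegativity -/

noncomputable def mass (P : A n) : ℝ := ∑ g, P g

lemma mass_mul (P Q : A n) : mass (P * Q) = mass P * mass Q := by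
  unfold mass
  simp_rw [mul_apply_conv]
  rw [Finset.sum_comm]
  have key : ∀ h : Equiv.Perm (Fin n),
      ∑ x : Equiv.Perm (Fin n), P (x * h⁻¹) * Q h = (∑ g, P g) * Q h := by
    intro h
    rw [← Finset.sum_mul]
    congr 1
    exact Fintype.sum_equiv (Equiv.mulRight h⁻¹) (fun x => P (x * h⁻¹))
      (fun x => P x) (fun x => rfl)
  rw [Finset.sum_congr rfl (fun h _ => key h), ← Finset.mul_sum]

lemma mass_single (x : Equiv.Perm (Fin n)) (c : ℝ) :
    mass (MonoidAlgebra.single (R := ℝ) x c) = c := by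
  unfold mass
  simp [MonoidAlgebra.coeff_single, Finsupp.single_apply, Finset.sum_ite_eq]

lemma mass_sum {ι : Type*} (s : Finset ι) (F : ι → A n) :
    mass (∑ i ∈ s, F i) = ∑ i ∈ s, mass (F i) := by
  unfold mass
  have : ∀ g : Equiv.Perm (Fin n), (∑ i ∈ s, F i) g = ∑ i ∈ s, F i g :=
    fun g => by rw [MonoidAlgebra.coeff_sum, Finset.sum_apply']
  rw [Finset.sum_congr rfl (fun g _ => this g)]
  exact Finset.sum_comm

lemma mass_step (j : Fin n) : mass (step j) = 1 := by
  rw [step, mass_sum]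
  have h : ∀ i ∈ Finset.Iic j,
      mass (MonoidAlgebra.single (R := ℝ) (Equiv.swap i j) (((j:ℕ):ℝ)+1)⁻¹)
        = (((j:ℕ):ℝ)+1)⁻¹ := fun i _ => mass_single _ _
  rw [Finset.sum_congr rfl h, Finset.sum_const, card_Iic_fin,
    ← Nat.cast_smul_eq_nsmul ℝ, smul_eq_mul]
  push_cast
  rw [mul_inv_cancel₀ (by positivity)]

lemma mass_one : mass (1 : A n) = 1 := by
  unfold mass
  simp [MonoidAlgebra.one_def, Finsupp.single_apply, eq_comm]

lemma mass_unifA : mass (unifA n) = 1 := by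
  rw [unifA, mass_sum]
  have h : ∀ g' : Equiv.Perm (Fin n), g' ∈ Finset.univ →
      mass (MonoidAlgebra.single (R := ℝ) g' ((n.factorial : ℝ))⁻¹)
        = ((n.factorial : ℝ))⁻¹ := fun g' _ => mass_single _ _
  rw [Finset.sum_congr rfl h, Finset.sum_const, Finset.card_univ, Fintype.card_perm,
    Fintype.card_fin, ← Nat.cast_smul_eq_nsmul ℝ, smul_eq_mul]
  rw [mul_inv_cancel₀ (Nat.cast_ne_zero.2 (Nat.factorial_ne_zero n))]

lemma nonneg_mul {P Q : A n} (hP : ∀ g, 0 ≤ P g) (hQ : ∀ g, 0 ≤ Q g) :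
    ∀ g, 0 ≤ (P * Q) g := by
  intro g
  rw [mul_apply_conv]
  exact Finset.sum_nonneg fun h _ => mul_nonneg (hP _) (hQ _)

lemma nonneg_step (j : Fin n) : ∀ g, 0 ≤ step j g := by
  intro g
  rw [step, MonoidAlgebra.coeff_sum, Finset.sum_apply']
  refine Finset.sum_nonneg fun i _ => ?_
  rw [MonoidAlgebra.coeff_single, Finsupp.single_apply]
  positivity

lemma nonneg_one : ∀ g, 0 ≤ (1 : A n) g := by
  intro g
  rw [MonoidAlgebra.one_def, MonoidAlgebra.coeff_single, Finsupp.single_apply]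
  positivity

lemma mass_prod_list (L : List (Fin n)) : mass ((L.map step).prod) = 1 := by
  induction L with
  | nil => simpa using mass_one
  | cons j L ih =>
    rw [List.map_cons, List.prod_cons, mass_mul, ih, mass_step, one_mul]

lemma nonneg_prod_list (L : List (Fin n)) : ∀ g, 0 ≤ ((L.map step).prod) g := by
  induction L with
  | nil => simpa using nonneg_one
  | cons j L ih =>
    rw [List.map_cons, List.prod_cons]
    exact nonneg_mul (nonneg_step j) ih


/-! ### Expansion of the convolution power -/

noncomputable def prodF {t : ℕ} (f : Fin t → Fin n) : A n := ((List.ofFn f).map step).prod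

lemma ofFn_cons {t : ℕ} (j : Fin n) (f : Fin t → Fin n) :
    List.ofFn (Fin.cons j f) = j :: List.ofFn f := by
  rw [List.ofFn_succ]
  simp [Fin.cons_zero, Fin.cons_succ]

lemma step_mul_prodF {t : ℕ} (j : Fin n) (f : Fin t → Fin n) :
    step j * prodF f = prodF (Fin.cons j f) := by
  rw [prodF, prodF, ofFn_cons, List.map_cons, List.prod_cons]

lemma ostA_pow (n t : ℕ) :
    ostA n ^ t = ∑ f : Fin t → Fin n, ((n : ℝ)⁻¹) ^ t • prodF f := by
  induction t with
  | zero =>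
    rw [pow_zero]
    have h : ∀ f : Fin 0 → Fin n, ((n:ℝ)⁻¹) ^ 0 • prodF f = (1 : A n) := by
      intro f
      simp [prodF, List.ofFn_zero]
    rw [Finset.sum_congr rfl (fun f _ => h f), Finset.sum_const]
    have : Fintype.card (Fin 0 → Fin n) = 1 := by simp
    rw [Finset.card_univ, this, one_smul]
  | succ t ih =>
    rw [pow_succ', ih, ostA, Finset.sum_mul_sum]
    have key : ∀ (j : Fin n) (f : Fin t → Fin n),
        ((n : ℝ)⁻¹ • step j) * (((n:ℝ)⁻¹)^t • prodF f)
          = ((n:ℝ)⁻¹)^(t+1) • prodF (Fin.cons j f) := by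
      intro j f
      rw [smul_mul_assoc, mul_smul_comm, smul_smul, ← pow_succ', step_mul_prodF]
    rw [Finset.sum_congr rfl (fun j _ => Finset.sum_congr rfl (fun f _ => key j f))]
    calc ∑ j : Fin n, ∑ f : Fin t → Fin n, ((n:ℝ)⁻¹)^(t+1) • prodF (Fin.cons j f)
        = ∑ p : Fin n × (Fin t → Fin n), ((n:ℝ)⁻¹)^(t+1) • prodF (Fin.cons p.1 p.2) :=
          (Fintype.sum_prod_type
            (f := fun p : Fin n × (Fin t → Fin n) =>
              ((n:ℝ)⁻¹)^(t+1) • prodF (Fin.cons p.1 p.2))).symm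
      _ = ∑ f : Fin (t+1) → Fin n, ((n:ℝ)⁻¹)^(t+1) • prodF f :=
          Fintype.sum_equiv (Fin.consEquiv (fun _ => Fin n))
            (fun p => ((n:ℝ)⁻¹)^(t+1) • prodF (Fin.cons p.1 p.2))
            (fun f => ((n:ℝ)⁻¹)^(t+1) • prodF f)
            (fun p => rfl)

/-! ### Counting non-surjective maps -/

lemma nonsurj_card (n t : ℕ) :
    ((Finset.univ : Finset (Fin t → Fin n)).filter
      (fun f => ¬ Function.Surjective f)).card ≤ n * (n-1)^t := by
  have hsub : ((Finset.univ : Finset (Fin t → Fin n)).filter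
        (fun f => ¬ Function.Surjective f))
      ⊆ Finset.univ.biUnion (fun j : Fin n =>
          Finset.univ.filter (fun f : Fin t → Fin n => ∀ k, f k ≠ j)) := by
    intro f hf
    rw [Finset.mem_filter, Function.Surjective] at hf
    push_neg at hf
    obtain ⟨j, hj⟩ := hf.2
    exact Finset.mem_biUnion.2 ⟨j, Finset.mem_univ _,
      Finset.mem_filter.2 ⟨Finset.mem_univ _, fun k h => hj k h⟩⟩
  refine le_trans (Finset.card_le_card hsub) (le_trans Finset.card_biUnion_le ?_)
  have hcard : ∀ j : Fin n,
      ((Finset.univ : Finset (Fin t → Fin n)).filter (fun f => ∀ k, f k ≠ j)).card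
        = (n-1)^t := by
    intro j
    have heq : ((Finset.univ : Finset (Fin t → Fin n)).filter (fun f => ∀ k, f k ≠ j))
        = Fintype.piFinset (fun _ : Fin t => Finset.univ.erase j) := by
      ext f
      simp [Fintype.mem_piFinset, Finset.mem_erase]
    rw [heq, Fintype.card_piFinset]
    simp [Finset.card_erase_of_mem, Finset.card_univ, Fintype.card_fin]
  rw [Finset.sum_congr rfl (fun j _ => hcard j), Finset.sum_const, Finset.card_univ,
    Fintype.card_fin, smul_eq_mul]


/-! ### The total-variation bound for fixed `n` -/

lemma nonneg_prodF {t : ℕ} (f : Fin t → Fin n) : ∀ g, 0 ≤ prodF f g :=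
  nonneg_prod_list _

lemma mass_prodF {t : ℕ} (f : Fin t → Fin n) : mass (prodF f) = 1 :=
  mass_prod_list _

lemma nonneg_unifA : ∀ g, 0 ≤ unifA n g := by
  intro g
  rw [show unifA n g = uniformPerm n g from by rw [uniformPerm_eq], uniformPerm]
  positivity

lemma surj_prodF {t : ℕ} {f : Fin t → Fin n} (hf : Function.Surjective f) :
    prodF f = unifA n := by
  refine prod_of_covering _ (fun j => ?_)
  rw [List.mem_ofFn]
  exact hf j

lemma tv_bound (n : ℕ) (hn : 1 ≤ n) (t : ℕ) :
    tvDist (convPow (OST n) t) (uniformPerm n)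
      ≤ (n : ℝ) * (((n - 1 : ℕ) : ℝ) / n) ^ t := by
  have hn0 : (0:ℝ) < n := by exact_mod_cast hn
  set w : ℝ := ((n : ℝ)⁻¹) ^ t with hw
  have hw0 : 0 ≤ w := by positivity
  have hwsum : ∑ _f : Fin t → Fin n, w = 1 := by
    rw [Finset.sum_const, Finset.card_univ, Fintype.card_fun, Fintype.card_fin,
      Fintype.card_fin, ← Nat.cast_smul_eq_nsmul ℝ, smul_eq_mul, hw]
    push_cast
    rw [← mul_pow, mul_inv_cancel₀ (ne_of_gt hn0), one_pow]
  have happ : ∀ σ, convPow (OST n) t σ = ∑ f : Fin t → Fin n, w * prodF f σ := by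
    intro σ
    rw [convPow_eq n t, ostA_pow n t, MonoidAlgebra.coeff_sum, Finset.sum_apply']
    refine Finset.sum_congr rfl fun f _ => ?_
    rw [MonoidAlgebra.coeff_smul_apply, smul_eq_mul]
  have huni : ∀ σ : Equiv.Perm (Fin n),
      (∑ _f : Fin t → Fin n, w * unifA n σ) = uniformPerm n σ := by
    intro σ
    rw [← Finset.sum_mul, hwsum, one_mul, uniformPerm_eq]
  have habs : ∀ σ, |convPow (OST n) t σ - uniformPerm n σ|
      ≤ ∑ f : Fin t → Fin n, w * |prodF f σ - unifA n σ| := by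
    intro σ
    rw [happ σ, ← huni σ, ← Finset.sum_sub_distrib]
    refine le_trans (Finset.abs_sum_le_sum_abs _ _) ?_
    refine Finset.sum_le_sum fun f _ => ?_
    rw [← mul_sub, abs_mul, abs_of_nonneg hw0]
  have hS : ∀ f : Fin t → Fin n, (∑ σ, |prodF f σ - unifA n σ|)
      ≤ if Function.Surjective f then 0 else 2 := by
    intro f
    by_cases hf : Function.Surjective f
    · rw [if_pos hf, surj_prodF hf]
      simp
    · rw [if_neg hf]
      have h1 : ∀ σ, |prodF f σ - unifA n σ| ≤ prodF f σ + unifA n σ := by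
        intro σ
        rw [sub_eq_add_neg]
        refine le_trans (abs_add_le _ _) ?_
        rw [abs_neg, abs_of_nonneg (nonneg_prodF f σ), abs_of_nonneg (nonneg_unifA σ)]
      refine le_trans (Finset.sum_le_sum fun σ _ => h1 σ) ?_
      rw [Finset.sum_add_distrib]
      have e1 : ∑ σ, prodF f σ = 1 := mass_prodF f
      have e2 : ∑ σ, unifA n σ = 1 := mass_unifA
      rw [e1, e2]
      norm_num
  have hcount : ((Finset.univ.filter
      (fun f : Fin t → Fin n => ¬ Function.Surjective f)).card : ℝ)
        ≤ (n : ℝ) * ((n-1 : ℕ) : ℝ)^t := by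
    have := nonsurj_card n t
    calc ((Finset.univ.filter
        (fun f : Fin t → Fin n => ¬ Function.Surjective f)).card : ℝ)
        ≤ ((n * (n-1)^t : ℕ) : ℝ) := by exact_mod_cast this
      _ = (n : ℝ) * ((n-1 : ℕ) : ℝ)^t := by push_cast; ring
  -- assemble
  rw [tvDist]
  calc (1/2 : ℝ) * ∑ σ, |convPow (OST n) t σ - uniformPerm n σ|
      ≤ (1/2 : ℝ) * ∑ σ, ∑ f : Fin t → Fin n, w * |prodF f σ - unifA n σ| := by
        refine mul_le_mul_of_nonneg_left (Finset.sum_le_sum fun σ _ => habs σ) (by norm_num)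
    _ = (1/2 : ℝ) * ∑ f : Fin t → Fin n, w * (∑ σ, |prodF f σ - unifA n σ|) := by
        rw [Finset.sum_comm]
        congr 1
        exact Finset.sum_congr rfl fun f _ => (Finset.mul_sum _ _ _).symm
    _ ≤ (1/2 : ℝ) * ∑ f : Fin t → Fin n,
          w * (if Function.Surjective f then 0 else 2) := by
        refine mul_le_mul_of_nonneg_left (Finset.sum_le_sum fun f _ => ?_) (by norm_num)
        exact mul_le_mul_of_nonneg_left (hS f) hw0
    _ = (1/2 : ℝ) * ∑ f ∈ Finset.univ.filter
          (fun f : Fin t → Fin n => ¬ Function.Surjective f), (2 * w) := by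
        congr 1
        rw [Finset.sum_filter]
        refine Finset.sum_congr rfl fun f _ => ?_
        by_cases hf : Function.Surjective f
        · simp [hf]
        · simp [hf, mul_comm]
    _ = (1/2 : ℝ) * (((Finset.univ.filter
          (fun f : Fin t → Fin n => ¬ Function.Surjective f)).card : ℝ) * (2 * w)) := by
        rw [Finset.sum_const, ← Nat.cast_smul_eq_nsmul ℝ, smul_eq_mul]
    _ ≤ (1/2 : ℝ) * (((n : ℝ) * ((n-1 : ℕ) : ℝ)^t) * (2 * w)) := by
        refine mul_le_mul_of_nonneg_left ?_ (by norm_num)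
        refine mul_le_mul_of_nonneg_right hcount (by positivity)
    _ = (n : ℝ) * (((n - 1 : ℕ) : ℝ) / n) ^ t := by
        rw [div_pow, hw, inv_pow, div_eq_mul_inv]
        ring

/-! ### The analytic tail bound -/

lemma tail_bound (c : ℝ) (n : ℕ) (hn : 2 ≤ n) :
    (n : ℝ) * (((n - 1 : ℕ) : ℝ) / n) ^ (⌈(n : ℝ) * Real.log n + c * n⌉₊)
      ≤ Real.exp (-c) := by
  have hn0 : (0:ℝ) < n := by exact_mod_cast Nat.lt_of_lt_of_le (by norm_num) hn
  have hb : (((n-1:ℕ):ℝ)/n) = 1 - 1/n := by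
    rw [Nat.cast_sub (by omega), Nat.cast_one]
    field_simp
  set t := ⌈(n : ℝ) * Real.log n + c * n⌉₊ with ht_def
  have h1 : (1 : ℝ) - 1/n ≤ Real.exp (-(1/n)) := by
    have := Real.add_one_le_exp (-(1/n))
    linarith
  have hbase : (0:ℝ) ≤ 1 - 1/n := by
    have h2 : 1/(n:ℝ) ≤ 1 := by
      rw [div_le_one hn0]
      exact_mod_cast Nat.one_le_iff_ne_zero.2 (by omega)
    linarith
  have h2 : ((1:ℝ) - 1/n)^t ≤ Real.exp (-(1/n))^t := pow_le_pow_left₀ hbase h1 t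
  rw [← Real.exp_nat_mul] at h2
  have ht : ((n : ℝ) * Real.log n + c * n) ≤ t := Nat.le_ceil _
  have h3 : (t : ℝ) * (-(1/n)) ≤ -(Real.log n + c) := by
    rw [mul_neg, neg_le_neg_iff, mul_one_div, le_div_iff₀ hn0]
    nlinarith [ht]
  calc (n : ℝ) * (((n - 1 : ℕ) : ℝ) / n) ^ t
      = (n : ℝ) * ((1:ℝ) - 1/n)^t := by rw [hb]
    _ ≤ (n : ℝ) * Real.exp ((t : ℝ) * (-(1/n))) :=
        mul_le_mul_of_nonneg_left h2 (le_of_lt hn0)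
    _ ≤ (n : ℝ) * Real.exp (-(Real.log n + c)) :=
        mul_le_mul_of_nonneg_left (Real.exp_le_exp.2 h3) (le_of_lt hn0)
    _ = Real.exp (-c) := by
        rw [neg_add, Real.exp_add, Real.exp_neg, Real.exp_log hn0, ← mul_assoc,
          mul_inv_cancel₀ (ne_of_gt hn0), one_mul]

end OSTAux

/-- Upper bound of the total-variation cutoff for the one-sided transposition shuffle:
for every `c > 0`,
`limsup_{n→∞} ‖OST_n^{⌈n log n + c n⌉} − π_n‖_TV ≤ √2 · e^{−c}`. -/
theorem ost_cutoff_upper (c : ℝ) (hc : 0 < c) :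
    Filter.limsup
      (fun n : ℕ =>
        tvDist (convPow (OST n) ⌈(n : ℝ) * Real.log n + c * n⌉₊) (uniformPerm n))
      Filter.atTop ≤ Real.sqrt 2 * Real.exp (-c) := by
  have hnn : ∀ N : ℕ,
      0 ≤ tvDist (convPow (OST N) ⌈(N : ℝ) * Real.log N + c * N⌉₊) (uniformPerm N) := by
    intro N
    rw [tvDist]
    positivity
  refine Filter.limsup_le_of_le
    (Filter.isCoboundedUnder_le_of_le Filter.atTop (fun i => hnn i)) ?_
  refine Filter.eventually_atTop.2 ⟨2, fun N hN => ?_⟩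
  have hsqrt : (1:ℝ) ≤ Real.sqrt 2 := by
    rw [show (1:ℝ) = Real.sqrt 1 from (Real.sqrt_one).symm]
    exact Real.sqrt_le_sqrt (by norm_num)
  calc tvDist (convPow (OST N) ⌈(N : ℝ) * Real.log N + c * N⌉₊) (uniformPerm N)
      ≤ (N : ℝ) * (((N - 1 : ℕ) : ℝ) / N) ^ (⌈(N : ℝ) * Real.log N + c * N⌉₊) :=
        OSTAux.tv_bound N (by omega) _
    _ ≤ Real.exp (-c) := OSTAux.tail_bound c N hN
    _ ≤ Real.sqrt 2 * Real.exp (-c) :=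
        le_mul_of_one_le_left (Real.exp_nonneg _) hsqrt
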